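/- Let D be a Dedekind domain and H a congruence subgroup of SL₂(D). Then there exists g₀ ∈ SL₂(D) such that c(H,g₀) ⊆ c(H,g) for every g ∈ SL₂(D); consequently the intersection ⋂_{g ∈ SL₂(D)} c(H,g) of all cusp amplitudes of H equals c(H,g₀) and is itself a cusp amplitude of H; in particular the level l(H) is a cusp amplitude of H. -/

import Mathlib

open Matrix

/-- The translation matrix `T(r) = [[1, r], [0, 1]]` in `SL₂(R)`. -/
def Tm (R : Type*) [CommRing R] (r : R) : Matrix.SpecialLinearGroup (Fin 2) R :=
  ⟨!![1, r; 0, 1], by simp [Matrix.det_fin_two_of]⟩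

/-- The principal congruence subgroup `SL₂(R, 𝔮)`, the kernel of reduction mod `𝔮`. -/
def SLmod (R : Type*) [CommRing R] (q : Ideal R) :
    Subgroup (Matrix.SpecialLinearGroup (Fin 2) R) :=
  (Matrix.SpecialLinearGroup.map (Ideal.Quotient.mk q)).ker

/-- `H` is a congruence subgroup: it contains a principal congruence subgroup of
nonzero level. -/
def IsCongruence {R : Type*} [CommRing R]
    (H : Subgroup (Matrix.SpecialLinearGroup (Fin 2) R)) : Prop :=
  ∃ q : Ideal R, q ≠ ⊥ ∧ SLmod R q ≤ H

/-- `q` is the level `l(H)` of `H`: the largest ideal all of whose associated translations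
lie in the normal core of `H` (equivalently, the largest ideal contained in the
quasi-level of `H`). -/
def IsLevel {R : Type*} [CommRing R]
    (H : Subgroup (Matrix.SpecialLinearGroup (Fin 2) R)) (q : Ideal R) : Prop :=
  (∀ r ∈ q, Tm R r ∈ H.normalCore) ∧
    ∀ I : Ideal R, (∀ r ∈ I, Tm R r ∈ H.normalCore) → I ≤ q

/-- `c` is the cusp amplitude `c(H,g)` of `H` at `g`: the largest ideal contained in the
quasi-amplitude `b(H,g) = {x | g · T(x) · g⁻¹ ∈ H}`. -/
def IsCuspAmplitude {R : Type*} [CommRing R]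
    (H : Subgroup (Matrix.SpecialLinearGroup (Fin 2) R))
    (g : Matrix.SpecialLinearGroup (Fin 2) R) (c : Ideal R) : Prop :=
  (∀ x ∈ c, g * Tm R x * g⁻¹ ∈ H) ∧
    ∀ I : Ideal R, (∀ x ∈ I, g * Tm R x * g⁻¹ ∈ H) → I ≤ c

section S8
variable {D : Type*} [CommRing D]

abbrev SL2 (R : Type*) [CommRing R] := Matrix.SpecialLinearGroup (Fin 2) R

def Lm (r : D) : SL2 D := ⟨!![1, 0; r, 1], by simp [Matrix.det_fin_two_of]⟩

def MCong (I : Ideal D) (A B : Matrix (Fin 2) (Fin 2) D) : Prop :=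
  ∀ i j, A i j - B i j ∈ I

lemma MCong.refl (I : Ideal D) (A : Matrix (Fin 2) (Fin 2) D) : MCong I A A := by
  intro i j; simp

lemma MCong.symm {I : Ideal D} {A B : Matrix (Fin 2) (Fin 2) D} (h : MCong I A B) :
    MCong I B A := by
  intro i j; have := I.neg_mem (h i j); simpa using this

lemma MCong.trans {I : Ideal D} {A B C : Matrix (Fin 2) (Fin 2) D} (h : MCong I A B)
    (h' : MCong I B C) : MCong I A C := by
  intro i j; have := I.add_mem (h i j) (h' i j); simpa using this

lemma MCong.mono {I J : Ideal D} {A B : Matrix (Fin 2) (Fin 2) D} (h : MCong I A B)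
    (hIJ : I ≤ J) : MCong J A B := fun i j => hIJ (h i j)

lemma MCong.mul {I : Ideal D} {A A' B B' : Matrix (Fin 2) (Fin 2) D}
    (hA : MCong I A A') (hB : MCong I B B') : MCong I (A * B) (A' * B') := by
  intro i j
  have : (A * B) i j - (A' * B') i j
      = ∑ k, ((A i k - A' i k) * B k j + A' i k * (B k j - B' k j)) := by
    simp [Matrix.mul_apply, Finset.sum_add_distrib, sub_mul, mul_sub]
  rw [this]
  exact Ideal.sum_mem _ fun k _ => Ideal.add_mem _
    (Ideal.mul_mem_right _ _ (hA i k)) (Ideal.mul_mem_left _ _ (hB k j))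

lemma MCong.sl_inv {I : Ideal D} {u : SL2 D} (h : MCong I (↑u) 1) :
    MCong I (↑(u⁻¹)) 1 := by
  have h2 : MCong I ((u⁻¹).1 * u.1) ((u⁻¹).1 * 1) :=
    MCong.mul (MCong.refl I _) h
  have h3 : (u⁻¹).1 * u.1 = 1 := by
    rw [← Matrix.SpecialLinearGroup.coe_mul, inv_mul_cancel,
      Matrix.SpecialLinearGroup.coe_one]
  rw [h3, mul_one] at h2
  exact h2.symm

lemma Tm_coe (r : D) : (↑(Tm D r) : Matrix (Fin 2) (Fin 2) D) = !![1, r; 0, 1] := rfl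
lemma Lm_coe (r : D) : (↑(Lm r) : Matrix (Fin 2) (Fin 2) D) = !![1, 0; r, 1] := rfl

lemma MCong_Tm {I : Ideal D} {r : D} (hr : r ∈ I) : MCong I (↑(Tm D r)) 1 := by
  intro i j; fin_cases i <;> fin_cases j <;>
    simp [Tm_coe, Matrix.one_apply] <;> assumption

lemma MCong_Lm {I : Ideal D} {r : D} (hr : r ∈ I) : MCong I (↑(Lm r)) 1 := by
  intro i j; fin_cases i <;> fin_cases j <;>
    simp [Lm_coe, Matrix.one_apply] <;> assumption

lemma Tm_mul_Tm (x y : D) : Tm D x * Tm D y = Tm D (x + y) := by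
  ext i j
  simp only [Matrix.SpecialLinearGroup.coe_mul, Tm_coe]
  fin_cases i <;> fin_cases j <;> simp [Matrix.mul_apply, Fin.sum_univ_two, add_comm]

lemma Lm_mul_Lm (x y : D) : Lm x * Lm y = Lm (x + y) := by
  ext i j
  simp only [Matrix.SpecialLinearGroup.coe_mul, Lm_coe]
  fin_cases i <;> fin_cases j <;> simp [Matrix.mul_apply, Fin.sum_univ_two]

lemma Tm_zero : Tm D 0 = 1 := by
  ext i j
  simp only [Tm_coe, Matrix.SpecialLinearGroup.coe_one]
  fin_cases i <;> fin_cases j <;> simp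

lemma Lm_zero : Lm (0 : D) = 1 := by
  ext i j
  simp only [Lm_coe, Matrix.SpecialLinearGroup.coe_one]
  fin_cases i <;> fin_cases j <;> simp

lemma Tm_neg_cancel (x : D) (z : SL2 D) : Tm D (-x) * (Tm D x * z) = z := by
  rw [← mul_assoc, Tm_mul_Tm, neg_add_cancel, Tm_zero, one_mul]

lemma Lm_neg_cancel (x : D) (z : SL2 D) : Lm (-x) * (Lm x * z) = z := by
  rw [← mul_assoc, Lm_mul_Lm, neg_add_cancel, Lm_zero, one_mul]

lemma Tm_mul_coe (s : D) (X : SL2 D) :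
    (↑(Tm D s * X) : Matrix (Fin 2) (Fin 2) D)
      = !![X.1 0 0 + s * X.1 1 0, X.1 0 1 + s * X.1 1 1; X.1 1 0, X.1 1 1] := by
  ext i j
  simp only [Matrix.SpecialLinearGroup.coe_mul, Tm_coe]
  fin_cases i <;> fin_cases j <;> simp [Matrix.mul_apply, Fin.sum_univ_two]

lemma Lm_mul_coe (s : D) (X : SL2 D) :
    (↑(Lm s * X) : Matrix (Fin 2) (Fin 2) D)
      = !![X.1 0 0, X.1 0 1; s * X.1 0 0 + X.1 1 0, s * X.1 0 1 + X.1 1 1] := by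
  ext i j
  simp only [Matrix.SpecialLinearGroup.coe_mul, Lm_coe]
  fin_cases i <;> fin_cases j <;> simp [Matrix.mul_apply, Fin.sum_univ_two]

end S8

section S8b
variable {D : Type*} [CommRing D]

lemma MCong.mul_one' {I : Ideal D} {X Y : Matrix (Fin 2) (Fin 2) D}
    (hX : MCong I X 1) (hY : MCong I Y 1) : MCong I (X * Y) 1 := by
  have := hX.mul hY; rwa [one_mul] at this

lemma Tmul00 (s : D) (X : SL2 D) : (Tm D s * X).1 0 0 = X.1 0 0 + s * X.1 1 0 := by
  simp [Matrix.SpecialLinearGroup.coe_mul, Tm_coe, Matrix.mul_apply, Fin.sum_univ_two]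
lemma Tmul01 (s : D) (X : SL2 D) : (Tm D s * X).1 0 1 = X.1 0 1 + s * X.1 1 1 := by
  simp [Matrix.SpecialLinearGroup.coe_mul, Tm_coe, Matrix.mul_apply, Fin.sum_univ_two]
lemma Tmul10 (s : D) (X : SL2 D) : (Tm D s * X).1 1 0 = X.1 1 0 := by
  simp [Matrix.SpecialLinearGroup.coe_mul, Tm_coe, Matrix.mul_apply, Fin.sum_univ_two]
lemma Tmul11 (s : D) (X : SL2 D) : (Tm D s * X).1 1 1 = X.1 1 1 := by
  simp [Matrix.SpecialLinearGroup.coe_mul, Tm_coe, Matrix.mul_apply, Fin.sum_univ_two]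
lemma Lmul00 (s : D) (X : SL2 D) : (Lm s * X).1 0 0 = X.1 0 0 := by
  simp [Matrix.SpecialLinearGroup.coe_mul, Lm_coe, Matrix.mul_apply, Fin.sum_univ_two]
lemma Lmul01 (s : D) (X : SL2 D) : (Lm s * X).1 0 1 = X.1 0 1 := by
  simp [Matrix.SpecialLinearGroup.coe_mul, Lm_coe, Matrix.mul_apply, Fin.sum_univ_two]
lemma Lmul10 (s : D) (X : SL2 D) : (Lm s * X).1 1 0 = s * X.1 0 0 + X.1 1 0 := by
  simp [Matrix.SpecialLinearGroup.coe_mul, Lm_coe, Matrix.mul_apply, Fin.sum_univ_two]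
lemma Lmul11 (s : D) (X : SL2 D) : (Lm s * X).1 1 1 = s * X.1 0 1 + X.1 1 1 := by
  simp [Matrix.SpecialLinearGroup.coe_mul, Lm_coe, Matrix.mul_apply, Fin.sum_univ_two]

lemma MCong_of_entries {I : Ideal D} {A : Matrix (Fin 2) (Fin 2) D}
    (h00 : A 0 0 - 1 ∈ I) (h01 : A 0 1 ∈ I) (h10 : A 1 0 ∈ I) (h11 : A 1 1 - 1 ∈ I) :
    MCong I A 1 := by
  intro i j
  fin_cases i <;> fin_cases j <;> simp [Matrix.one_apply]
  · exact h00
  · exact h01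
  · exact h10
  · exact h11

variable [IsDomain D]

/-- Step A: make the lower-left entry avoid the maximal ideal `𝔮`. -/
lemma exists_unitize {𝔞 𝔮 : Ideal D} (hm : 𝔮.IsMaximal) (h𝔞 : ¬ 𝔞 ≤ 𝔮)
    {a b c d : D} (hdet : a * d - b * c = 1) :
    ∃ r ∈ 𝔞, c + r * a ∉ 𝔮 := by
  by_cases hc : c ∈ 𝔮
  · have ha : a ∉ 𝔮 := by
      intro ha
      have h1 : (1 : D) ∈ 𝔮 := by
        have := Ideal.sub_mem 𝔮 (Ideal.mul_mem_right d _ ha) (Ideal.mul_mem_left 𝔮 b hc)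
        rwa [hdet] at this
      exact hm.ne_top (Ideal.eq_top_of_isUnit_mem _ h1 isUnit_one)
    obtain ⟨r, hr𝔞, hr𝔮⟩ := SetLike.not_le_iff_exists.mp h𝔞
    refine ⟨r, hr𝔞, fun h => ?_⟩
    have hra : r * a ∈ 𝔮 := by
      have := Ideal.sub_mem 𝔮 h hc; simpa using this
    rcases hm.isPrime.mem_or_mem hra with h' | h'
    · exact hr𝔮 h'
    · exact ha h'
  · exact ⟨0, Ideal.zero_mem _, by simpa using hc⟩

/-- CRT-type lifting for `SL₂`. -/
lemma sl2_crt {𝔞 𝔮 : Ideal D} (n : ℕ) (hmx : 𝔮.IsMaximal) (hco : IsCoprime 𝔞 (𝔮 ^ n))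
    (m : SL2 D) :
    ∃ w : SL2 D, MCong 𝔞 (↑w) 1 ∧ MCong (𝔮 ^ n) (↑w) (↑m) := by
  rcases Nat.eq_zero_or_pos n with hn | hn
  · refine ⟨1, ?_, ?_⟩ <;> intro i j <;> simp [hn]
  obtain ⟨e, he, f, hf, hef⟩ := Ideal.isCoprime_iff_exists.mp hco
  have pick : ∀ x : D, x * e ∈ 𝔞 ∧ x * e - x ∈ 𝔮 ^ n := by
    intro x
    refine ⟨Ideal.mul_mem_left _ _ he, ?_⟩
    have hx : x * e - x = (-x) * f := by linear_combination x * hef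
    rw [hx]
    exact Ideal.mul_mem_left _ _ hf
  have h𝔞𝔮 : ¬ 𝔞 ≤ 𝔮 := by
    intro hle
    have htop : (⊤ : Ideal D) ≤ 𝔮 := by
      rw [← Ideal.isCoprime_iff_sup_eq.mp hco]
      exact sup_le hle (Ideal.pow_le_self hn.ne')
    exact hmx.ne_top (top_le_iff.mp htop)
  have hdet : m.1 0 0 * m.1 1 1 - m.1 0 1 * m.1 1 0 = 1 := by
    have := m.2; rwa [Matrix.det_fin_two] at this
  obtain ⟨r, hr𝔞, hc'⟩ := exists_unitize hmx h𝔞𝔮 hdet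
  have hB10 : (Lm r * m).1 1 0 ∉ 𝔮 := by
    rw [Lmul10]; simpa [add_comm] using hc'
  obtain ⟨y, i, hi, hyi⟩ := hmx.exists_inv hB10
  have hcop : IsCoprime (Ideal.span {(Lm r * m).1 1 0}) (𝔮 ^ n) := by
    refine IsCoprime.pow_right ?_
    rw [Ideal.isCoprime_iff_exists]
    exact ⟨y * (Lm r * m).1 1 0, Ideal.mem_span_singleton'.mpr ⟨y, rfl⟩, i, hi, hyi⟩
  obtain ⟨i', hi', t, ht, hit⟩ := Ideal.isCoprime_iff_exists.mp hcop
  obtain ⟨u, hu⟩ := Ideal.mem_span_singleton'.mp hi'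
  have hut : u * (Lm r * m).1 1 0 + t = 1 := by rw [hu]; exact hit
  -- step B : fix the (0,0) entry
  set m1 : SL2 D := Lm r * m with hm1
  set s : D := ((1 - m1.1 0 0) * u) * e with hs_def
  have hs := pick ((1 - m1.1 0 0) * u)
  set m2 : SL2 D := Tm D s * m1 with hm2
  have hC00 : m2.1 0 0 - 1 ∈ 𝔮 ^ n := by
    have heq : m2.1 0 0 - 1
        = (s - (1 - m1.1 0 0) * u) * m1.1 1 0 - (1 - m1.1 0 0) * t := by
      rw [hm2, Tmul00]
      linear_combination (1 - m1.1 0 0) * hut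
    rw [heq]
    exact Ideal.sub_mem _ (Ideal.mul_mem_right _ _ hs.2) (Ideal.mul_mem_left _ _ ht)
  -- step C : clear the (1,0) entry
  set s₂ : D := (-(m2.1 1 0)) * e with hs2_def
  have hs₂ := pick (-(m2.1 1 0))
  set m3 : SL2 D := Lm s₂ * m2 with hm3
  have hD00 : m3.1 0 0 - 1 ∈ 𝔮 ^ n := by rw [hm3, Lmul00]; exact hC00
  have hD10 : m3.1 1 0 ∈ 𝔮 ^ n := by
    have heq : m3.1 1 0
        = (s₂ - (-(m2.1 1 0))) * m2.1 0 0 - m2.1 1 0 * (m2.1 0 0 - 1) := by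
      rw [hm3, Lmul10]; ring
    rw [heq]
    exact Ideal.sub_mem _ (Ideal.mul_mem_right _ _ hs₂.2) (Ideal.mul_mem_left _ _ hC00)
  have hdet3 : m3.1 0 0 * m3.1 1 1 - m3.1 0 1 * m3.1 1 0 = 1 := by
    have := m3.2; rwa [Matrix.det_fin_two] at this
  have hD11 : m3.1 1 1 - 1 ∈ 𝔮 ^ n := by
    have heq : m3.1 1 1 - 1
        = (m3.1 0 0 - 1) * (-(m3.1 1 1)) + m3.1 0 1 * m3.1 1 0 := by
      linear_combination hdet3
    rw [heq]
    exact Ideal.add_mem _ (Ideal.mul_mem_right _ _ hD00) (Ideal.mul_mem_left _ _ hD10)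
  -- step D : clear the (0,1) entry
  set s₃ : D := (-(m3.1 0 1)) * e with hs3_def
  have hs₃ := pick (-(m3.1 0 1))
  set m4 : SL2 D := Tm D s₃ * m3 with hm4
  have hE : MCong (𝔮 ^ n) m4.1 1 := by
    refine MCong_of_entries ?_ ?_ ?_ ?_
    · rw [hm4, Tmul00]
      have heq : m3.1 0 0 + s₃ * m3.1 1 0 - 1 = (m3.1 0 0 - 1) + s₃ * m3.1 1 0 := by ring
      rw [heq]
      exact Ideal.add_mem _ hD00 (Ideal.mul_mem_left _ _ hD10)
    · rw [hm4, Tmul01]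
      have heq : m3.1 0 1 + s₃ * m3.1 1 1
          = (s₃ - (-(m3.1 0 1))) * m3.1 1 1 - m3.1 0 1 * (m3.1 1 1 - 1) := by ring
      rw [heq]
      exact Ideal.sub_mem _ (Ideal.mul_mem_right _ _ hs₃.2) (Ideal.mul_mem_left _ _ hD11)
    · rw [hm4, Tmul10]; exact hD10
    · rw [hm4, Tmul11]; exact hD11
  -- assemble w
  have hs𝔞 : s ∈ 𝔞 := by rw [hs_def]; exact hs.1
  have hs₂𝔞 : s₂ ∈ 𝔞 := by rw [hs2_def]; exact hs₂.1
  have hs₃𝔞 : s₃ ∈ 𝔞 := by rw [hs3_def]; exact hs₃.1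
  refine ⟨Lm (-r) * (Tm D (-s) * (Lm (-s₂) * Tm D (-s₃))), ?_, ?_⟩
  · have hco1 : MCong 𝔞 ((Lm (-s₂) * Tm D (-s₃)).1) 1 := by
      rw [Matrix.SpecialLinearGroup.coe_mul]
      exact MCong.mul_one' (MCong_Lm (neg_mem hs₂𝔞)) (MCong_Tm (neg_mem hs₃𝔞))
    have hco2 : MCong 𝔞 ((Tm D (-s) * (Lm (-s₂) * Tm D (-s₃))).1) 1 := by
      rw [Matrix.SpecialLinearGroup.coe_mul]
      exact MCong.mul_one' (MCong_Tm (neg_mem hs𝔞)) hco1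
    rw [Matrix.SpecialLinearGroup.coe_mul]
    exact MCong.mul_one' (MCong_Lm (neg_mem hr𝔞)) hco2
  · have hwm : (Lm (-r) * (Tm D (-s) * (Lm (-s₂) * Tm D (-s₃)))) * m4 = m := by
      rw [hm4, hm3, hm2, hm1]
      simp only [mul_assoc]
      rw [Tm_neg_cancel, Lm_neg_cancel, Tm_neg_cancel, Lm_neg_cancel]
    have hw_eq : (Lm (-r) * (Tm D (-s) * (Lm (-s₂) * Tm D (-s₃)))) = m * m4⁻¹ := by
      rw [← hwm]; group
    rw [hw_eq, Matrix.SpecialLinearGroup.coe_mul]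
    have hinv : MCong (𝔮 ^ n) ((m4⁻¹).1) 1 := MCong.sl_inv hE
    have := (MCong.refl (𝔮 ^ n) m.1).mul hinv
    rwa [mul_one] at this

end S8b

section S8c
variable {D : Type*} [CommRing D]

lemma mem_SLmod_iff {q : Ideal D} {g : SL2 D} :
    g ∈ SLmod D q ↔ MCong q (↑g) 1 := by
  have key : (Matrix.SpecialLinearGroup.map (Ideal.Quotient.mk q)) g = 1 ↔
      ∀ i j, (↑g : Matrix (Fin 2) (Fin 2) D) i j - (1 : Matrix (Fin 2) (Fin 2) D) i j ∈ q := by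
    rw [show ∀ A B : SL2 (D ⧸ q), A = B ↔ A.1 = B.1 from fun A B => Subtype.ext_iff]
    constructor
    · intro h i j
      have h3 := congrFun (congrFun h i) j
      simp [Matrix.SpecialLinearGroup.map_apply_coe, RingHom.mapMatrix_apply, Matrix.map_apply, Matrix.one_apply] at h3 ⊢
      rw [← Ideal.Quotient.eq]
      simpa [Matrix.one_apply, apply_ite (Ideal.Quotient.mk q)] using h3
    · intro h
      ext i j
      have := h i j
      rw [← Ideal.Quotient.eq_zero_iff_mem, map_sub] at this
      simp [Matrix.SpecialLinearGroup.map_apply_coe, RingHom.mapMatrix_apply, Matrix.map_apply, Matrix.one_apply, apply_ite (Ideal.Quotient.mk q)]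
      rw [sub_eq_zero] at this
      simpa [Matrix.one_apply, apply_ite (Ideal.Quotient.mk q)] using this
  exact key

lemma Tm_mem_SLmod {q : Ideal D} {x : D} (hx : x ∈ q) : Tm D x ∈ SLmod D q :=
  mem_SLmod_iff.mpr (MCong_Tm hx)

def Em : Matrix (Fin 2) (Fin 2) D := !![0, 1; 0, 0]

lemma Tm_coe_em (x : D) : (Tm D x).1 = 1 + x • (Em : Matrix (Fin 2) (Fin 2) D) := by
  ext i j
  fin_cases i <;> fin_cases j <;> simp [Tm, Em, Matrix.one_apply]

lemma conj_coe (g : SL2 D) (x : D) :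
    (g * Tm D x * g⁻¹).1 = 1 + x • (g.1 * Em * (g⁻¹).1) := by
  have h1 : (g * Tm D x * g⁻¹).1 = g.1 * (Tm D x).1 * (g⁻¹).1 := by
    simp [Matrix.SpecialLinearGroup.coe_mul]
  have h2 : g.1 * (g⁻¹).1 = 1 := by
    rw [← Matrix.SpecialLinearGroup.coe_mul, mul_inv_cancel, Matrix.SpecialLinearGroup.coe_one]
  rw [h1, Tm_coe_em, mul_add, add_mul, mul_one, h2, Matrix.mul_smul, Matrix.smul_mul]

lemma adj_mcong {𝔞 : Ideal D} {g g' : SL2 D} (hgg' : MCong 𝔞 g.1 g'.1) :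
    MCong 𝔞 (g⁻¹).1 (g'⁻¹).1 := by
  intro i j
  rw [Matrix.SpecialLinearGroup.coe_inv, Matrix.SpecialLinearGroup.coe_inv,
    Matrix.adjugate_fin_two, Matrix.adjugate_fin_two]
  fin_cases i <;> fin_cases j <;> simp <;>
    first
      | exact hgg' 1 1
      | exact hgg' 0 0
      | (simpa using neg_mem (hgg' 0 1))
      | (simpa [neg_add_eq_sub] using neg_mem (hgg' 0 1))
      | (simpa using neg_mem (hgg' 1 0))
      | (simpa [neg_add_eq_sub] using neg_mem (hgg' 1 0))
      | (simpa using neg_mem (hgg'.symm 0 1))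
      | (simpa using neg_mem (hgg'.symm 1 0))

lemma conj_mem_of_mcong {H : Subgroup (SL2 D)} {q' : Ideal D} (hq'H : SLmod D q' ≤ H)
    {g g' : SL2 D} {𝔞 : Ideal D} (hgg' : MCong 𝔞 g.1 g'.1) {x : D}
    (hx : ∀ a ∈ 𝔞, x * a ∈ q') (h1 : g * Tm D x * g⁻¹ ∈ H) : g' * Tm D x * g'⁻¹ ∈ H := by
  have hadj : MCong 𝔞 (g⁻¹).1 (g'⁻¹).1 := adj_mcong hgg'
  have hQP : MCong q' (g' * Tm D x * g'⁻¹).1 (g * Tm D x * g⁻¹).1 := by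
    intro i j
    rw [conj_coe, conj_coe]
    have hNN : MCong 𝔞 (g'.1 * Em * (g'⁻¹).1) (g.1 * Em * (g⁻¹).1) :=
      ((hgg'.symm).mul (MCong.refl _ _)).mul hadj.symm
    have heq : ((1 + x • (g'.1 * Em * (g'⁻¹).1) : Matrix (Fin 2) (Fin 2) D)) i j
          - ((1 + x • (g.1 * Em * (g⁻¹).1) : Matrix (Fin 2) (Fin 2) D)) i j
        = x * ((g'.1 * Em * (g'⁻¹).1 : Matrix (Fin 2) (Fin 2) D) i j
          - (g.1 * Em * (g⁻¹).1 : Matrix (Fin 2) (Fin 2) D) i j) := by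
      simp [Matrix.add_apply, Matrix.smul_apply, smul_eq_mul]; ring
    rw [heq]
    exact hx _ (hNN i j)
  have hM : (g * Tm D x * g⁻¹)⁻¹ * (g' * Tm D x * g'⁻¹) ∈ SLmod D q' := by
    rw [mem_SLmod_iff]
    have hcoe : ((g * Tm D x * g⁻¹)⁻¹ * (g' * Tm D x * g'⁻¹)).1
        = ((g * Tm D x * g⁻¹)⁻¹).1 * (g' * Tm D x * g'⁻¹).1 :=
      Matrix.SpecialLinearGroup.coe_mul _ _
    have h2 : MCong q' (((g * Tm D x * g⁻¹)⁻¹).1 * (g' * Tm D x * g'⁻¹).1)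
        (((g * Tm D x * g⁻¹)⁻¹).1 * (g * Tm D x * g⁻¹).1) := (MCong.refl q' _).mul hQP
    have h3 : ((g * Tm D x * g⁻¹)⁻¹).1 * (g * Tm D x * g⁻¹).1 = 1 := by
      rw [← Matrix.SpecialLinearGroup.coe_mul, inv_mul_cancel, Matrix.SpecialLinearGroup.coe_one]
    rw [hcoe]
    rw [h3] at h2
    exact h2
  have hfact : g' * Tm D x * g'⁻¹
      = (g * Tm D x * g⁻¹) * ((g * Tm D x * g⁻¹)⁻¹ * (g' * Tm D x * g'⁻¹)) := by group
  rw [hfact]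
  exact H.mul_mem h1 (hq'H hM)

lemma sl2_crt_finset [IsDomain D] {T : Finset (Ideal D)}
    (n : Ideal D → ℕ) (hmax : ∀ 𝔭 ∈ T, (𝔭 : Ideal D).IsMaximal)
    (hcop : ∀ 𝔭 ∈ T, ∀ 𝔮 ∈ T, 𝔭 ≠ 𝔮 → IsCoprime (𝔭 ^ n 𝔭) (𝔮 ^ n 𝔮))
    (gf : Ideal D → SL2 D) :
    ∃ g₀ : SL2 D, ∀ 𝔭 ∈ T, MCong (𝔭 ^ n 𝔭) g₀.1 (gf 𝔭).1 := by
  classical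
  induction T using Finset.induction_on with
  | empty => exact ⟨1, by simp⟩
  | @insert 𝔮₀ s h𝔮₀ ih =>
    obtain ⟨g', hg'⟩ := ih (fun 𝔭 h => hmax _ (Finset.mem_insert_of_mem h))
      (fun 𝔭 h𝔭 𝔮 h𝔮 hne => hcop 𝔭 (Finset.mem_insert_of_mem h𝔭) 𝔮
        (Finset.mem_insert_of_mem h𝔮) hne)
    have hcop' : IsCoprime (∏ 𝔭 ∈ s, 𝔭 ^ n 𝔭) (𝔮₀ ^ n 𝔮₀) :=
      IsCoprime.prod_left fun 𝔭 h𝔭 => hcop 𝔭 (Finset.mem_insert_of_mem h𝔭) 𝔮₀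
        (Finset.mem_insert_self _ _) (fun h => h𝔮₀ (h ▸ h𝔭))
    obtain ⟨w, hw𝔞, hw𝔮⟩ := sl2_crt (n 𝔮₀) (hmax 𝔮₀ (Finset.mem_insert_self _ _)) hcop'
      (gf 𝔮₀ * g'⁻¹)
    refine ⟨w * g', ?_⟩
    intro 𝔭 h𝔭
    rcases Finset.mem_insert.mp h𝔭 with rfl | h𝔭s
    · have h1 : MCong (𝔭 ^ n 𝔭) ((w * g').1) ((gf 𝔭 * g'⁻¹).1 * g'.1) := by
        rw [Matrix.SpecialLinearGroup.coe_mul]; exact hw𝔮.mul (MCong.refl _ _)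
      have h2 : (gf 𝔭 * g'⁻¹).1 * g'.1 = (gf 𝔭).1 := by
        rw [← Matrix.SpecialLinearGroup.coe_mul, inv_mul_cancel_right]
      rwa [h2] at h1
    · have hle : (∏ 𝔭' ∈ s, 𝔭' ^ n 𝔭') ≤ 𝔭 ^ n 𝔭 := by
        rw [← Finset.prod_erase_mul s _ h𝔭s]
        exact Ideal.mul_le_right
      have hw1 : MCong (𝔭 ^ n 𝔭) w.1 1 := hw𝔞.mono hle
      have h1 : MCong (𝔭 ^ n 𝔭) ((w * g').1) ((1 : Matrix (Fin 2) (Fin 2) D) * g'.1) := by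
        rw [Matrix.SpecialLinearGroup.coe_mul]; exact hw1.mul (MCong.refl _ _)
      rw [one_mul] at h1
      exact h1.trans (hg' 𝔭 h𝔭s)

end S8c

open UniqueFactorizationMonoid in
/-- Theorem 2.10 and Corollary 2.11. Let `H` be a congruence subgroup of
`SL₂(D)` with level `q` and let `c g` denote the cusp amplitude of `H` at `g`. Then there
is `g₀` with `c g₀ ≤ c g` for all `g`; consequently the intersection of all cusp
amplitudes equals `c g₀` and is itself a cusp amplitude; in particular the level `q` is a
cusp amplitude of `H`. -/
theorem statement8 {D : Type*} [CommRing D] [IsDomain D] [IsDedekindDomain D]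
    (H : Subgroup (Matrix.SpecialLinearGroup (Fin 2) D)) (hH : IsCongruence H)
    (q : Ideal D) (hq : IsLevel H q)
    (c : Matrix.SpecialLinearGroup (Fin 2) D → Ideal D)
    (hc : ∀ g, IsCuspAmplitude H g (c g)) :
    ∃ g₀ : Matrix.SpecialLinearGroup (Fin 2) D,
      (∀ g, c g₀ ≤ c g) ∧ (⨅ g, c g) = c g₀ ∧ c g₀ = q := by
  classical
  obtain ⟨q', hq'0, hq'H⟩ := hH
  have hnormal : (SLmod D q').Normal := MonoidHom.normal_ker _
  have hq'le : ∀ g, q' ≤ c g := by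
    intro g
    exact (hc g).2 q' (fun x hx => hq'H (hnormal.conj_mem _ (Tm_mem_SLmod hx) g))
  have hqle : ∀ g, q ≤ c g := by
    intro g
    exact (hc g).2 q (fun r hr => hq.1 r hr g)
  have hinfq : (⨅ g, c g) ≤ q := by
    refine hq.2 _ (fun r hr => ?_)
    exact fun b => (hc b).1 r (Ideal.mem_iInf.mp hr b)
  -- counting setup
  set cnt : Ideal D → Ideal D → ℕ := fun 𝔭 I => (normalizedFactors I).count 𝔭 with hcnt_def
  set T : Finset (Ideal D) := (normalizedFactors q').toFinset with hT_def
  have hq'0' : q' ≠ 0 := by simpa [Ideal.zero_eq_bot] using hq'0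
  have hprime : ∀ 𝔭 ∈ T, Prime 𝔭 := fun 𝔭 h𝔭 =>
    prime_of_normalized_factor 𝔭 (Multiset.mem_toFinset.mp h𝔭)
  have hmax : ∀ 𝔭 ∈ T, (𝔭 : Ideal D).IsMaximal := by
    intro 𝔭 h𝔭
    exact Ideal.IsPrime.isMaximal (Ideal.isPrime_of_prime (hprime 𝔭 h𝔭)) (hprime 𝔭 h𝔭).ne_zero
  have hcop : ∀ 𝔭 ∈ T, ∀ 𝔮 ∈ T, 𝔭 ≠ 𝔮 → IsCoprime (𝔭 ^ cnt 𝔭 q') (𝔮 ^ cnt 𝔮 q') := by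
    intro 𝔭 h𝔭 𝔮 h𝔮 hne
    exact (Ideal.isCoprime_iff_sup_eq.mpr ((hmax 𝔭 h𝔭).coprime_of_ne (hmax 𝔮 h𝔮) hne)).pow
  have hTfact : (∏ 𝔭 ∈ T, 𝔭 ^ cnt 𝔭 q') = q' := by
    rw [hT_def, ← Finset.prod_multiset_count]
    exact prod_normalizedFactors_eq_self hq'0
  -- choose maximizers
  have hgp : ∀ 𝔭 : Ideal D, ∃ gp : Matrix.SpecialLinearGroup (Fin 2) D,
      ∀ g, cnt 𝔭 (c g) ≤ cnt 𝔭 (c gp) := by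
    intro 𝔭
    have hbdd : BddAbove (Set.range fun g => cnt 𝔭 (c g)) := by
      refine ⟨cnt 𝔭 q', ?_⟩
      rintro _ ⟨g, rfl⟩
      exact count_le_of_ideal_ge (hq'le g) hq'0 𝔭
    have hmem := Nat.sSup_mem (Set.range_nonempty _) hbdd
    obtain ⟨gp, hgp⟩ := hmem
    exact ⟨gp, fun g => le_trans (le_csSup hbdd ⟨g, rfl⟩) (le_of_eq hgp.symm)⟩
  choose gf hgf using hgp
  obtain ⟨g₀, hg₀⟩ := sl2_crt_finset (fun 𝔭 => cnt 𝔭 q') hmax hcop gf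
  have hcg₀ne : c g₀ ≠ ⊥ := ne_bot_of_le_ne_bot hq'0 (hq'le g₀)
  -- the key counting estimate
  have key : ∀ 𝔭 ∈ T, cnt 𝔭 (c (gf 𝔭)) ≤ cnt 𝔭 (c g₀) := by
    intro 𝔭 h𝔭
    set 𝔟 : Ideal D := ∏ 𝔮 ∈ T.erase 𝔭, 𝔮 ^ cnt 𝔮 q' with h𝔟_def
    have h𝔟mul : 𝔟 * 𝔭 ^ cnt 𝔭 q' = q' := by
      rw [h𝔟_def, Finset.prod_erase_mul T _ h𝔭]; exact hTfact
    have h𝔟ne : 𝔟 ≠ ⊥ := by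
      intro h
      rw [h] at h𝔟mul
      simp only [Ideal.bot_mul] at h𝔟mul
      exact hq'0 h𝔟mul.symm
    have hq'𝔟 : q' ≤ 𝔟 := by rw [← h𝔟mul]; exact Ideal.mul_le_left
    have hsub : c g₀ ⊓ 𝔟 ≤ c (gf 𝔭) := by
      refine (hc (gf 𝔭)).2 _ (fun x hx => ?_)
      refine conj_mem_of_mcong hq'H (hg₀ 𝔭 h𝔭) (fun a ha => ?_)
        ((hc g₀).1 x (Submodule.mem_inf.mp hx).1)
      have hmul := Ideal.mul_mem_mul (Submodule.mem_inf.mp hx).2 ha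
      rwa [h𝔟mul] at hmul
    have hinfne : c g₀ ⊓ 𝔟 ≠ ⊥ :=
      ne_bot_of_le_ne_bot hq'0 (le_inf (hq'le g₀) hq'𝔟)
    have hmulne : c g₀ * 𝔟 ≠ ⊥ := by
      simp only [Ne, Ideal.zero_eq_bot.symm] at hcg₀ne h𝔟ne ⊢
      exact mul_ne_zero hcg₀ne h𝔟ne
    have hcnt𝔟 : cnt 𝔭 𝔟 = 0 := by
      rw [hcnt_def]
      refine Multiset.count_eq_zero.mpr (fun hmem => ?_)
      have hdvd : 𝔭 ∣ 𝔟 := dvd_of_mem_normalizedFactors hmem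
      obtain ⟨𝔮, h𝔮e, h𝔮dvd⟩ := (hprime 𝔭 h𝔭).exists_mem_finset_dvd hdvd
      have h𝔭𝔮 : 𝔭 = 𝔮 := by
        refine associated_iff_eq.mp (((hprime 𝔭 h𝔭).associated_of_dvd
          (hprime 𝔮 (Finset.mem_of_mem_erase h𝔮e)) ((hprime 𝔭 h𝔭).dvd_of_dvd_pow h𝔮dvd)))
      exact Finset.ne_of_mem_erase h𝔮e h𝔭𝔮.symm
    calc cnt 𝔭 (c (gf 𝔭)) ≤ cnt 𝔭 (c g₀ ⊓ 𝔟) := count_le_of_ideal_ge hsub hinfne 𝔭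
      _ ≤ cnt 𝔭 (c g₀ * 𝔟) := count_le_of_ideal_ge Ideal.mul_le_inf hmulne 𝔭
      _ = cnt 𝔭 (c g₀) + cnt 𝔭 𝔟 := by
          rw [hcnt_def]
          simp only []
          rw [normalizedFactors_mul (by simpa [Ideal.zero_eq_bot] using hcg₀ne)
            (by simpa [Ideal.zero_eq_bot] using h𝔟ne), Multiset.count_add]
      _ = cnt 𝔭 (c g₀) := by rw [hcnt𝔟, add_zero]
  -- conclude minimality
  have hle : ∀ g, c g₀ ≤ c g := by
    intro g
    have hcgne0 : c g ≠ ⊥ := ne_bot_of_le_ne_bot hq'0 (hq'le g)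
    have hcgne : c g ≠ 0 := by simpa [Ideal.zero_eq_bot] using hcgne0
    rw [← Ideal.dvd_iff_le, dvd_iff_normalizedFactors_le_normalizedFactors hcgne
      (by simpa [Ideal.zero_eq_bot] using hcg₀ne), Multiset.le_iff_count]
    intro 𝔭
    by_cases h𝔭 : 𝔭 ∈ T
    · exact le_trans (hgf 𝔭 g) (key 𝔭 h𝔭)
    · have h1 : cnt 𝔭 (c g) ≤ cnt 𝔭 q' := count_le_of_ideal_ge (hq'le g) hq'0 𝔭
      have h0 : cnt 𝔭 q' = 0 :=
        Multiset.count_eq_zero.mpr (fun hm => h𝔭 (Multiset.mem_toFinset.mpr hm))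
      simp only [hcnt_def] at h1 h0
      omega
  exact ⟨g₀, hle, le_antisymm (iInf_le _ g₀) (le_iInf hle),
    le_antisymm (le_trans (le_iInf hle) hinfq) (hqle g₀)⟩
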